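/- Let p be a prime, let S ⊂ ℚ_p be a scaling set of an MRA and let W ⊂ ℚ_p be a wavelet set whose associated wavelet is orthogonal to the space V_0 of that MRA. Then μ(S ∩ W) = 0, i.e. S and W are disjoint up to a set of measure zero. -/

import Mathlib

open MeasureTheory Filter Topology Set
open scoped ENNReal ComplexConjugate

noncomputable section

namespace PadicScaling

attribute [local instance] Classical.propDecidable

variable (p : ℕ) [hp : Fact p.Prime]

instance : MeasurableSpace ℚ_[p] := borel _
instance : BorelSpace ℚ_[p] := ⟨rfl⟩

/-- The closed unit ball `ℤ_p = {x : |x|_p ≤ 1}` as a positive compact set. -/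
def unitBallPC : TopologicalSpace.PositiveCompacts ℚ_[p] where
  carrier := Metric.closedBall 0 1
  isCompact' := isCompact_closedBall 0 1
  interior_nonempty' :=
    ⟨0, interior_maximal Metric.ball_subset_closedBall Metric.isOpen_ball
      (Metric.mem_ball_self one_pos)⟩

/-- The Haar measure on `ℚ_p`, normalized so that `μ(ℤ_p) = 1`. -/
def μp : Measure ℚ_[p] := Measure.addHaarMeasure (unitBallPC p)

/-- The dilate `c·S = {c·x : x ∈ S}` of a set `S ⊆ ℚ_p`. -/
def dil (c : ℚ_[p]) (S : Set ℚ_[p]) : Set ℚ_[p] := (fun x => c * x) '' S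

/-- The ball `B_γ(0) = {x : |x|_p ≤ p^γ}`. -/
def ball (γ : ℤ) : Set ℚ_[p] := {x : ℚ_[p] | ‖x‖ ≤ (p : ℝ) ^ γ}

/-- The fractional part `{x}_p` of a `p`-adic number, as a rational number:
the unique rational `q` of the form `k/p^m` with `0 ≤ q < 1` and `x - q ∈ ℤ_p`. -/
def padicFract (x : ℚ_[p]) : ℚ :=
  if h : ∃ q : ℚ, (0 ≤ q ∧ q < 1 ∧ ∃ m k : ℕ, q = (k : ℚ) / (p : ℚ) ^ m) ∧
      ‖x - (q : ℚ_[p])‖ ≤ 1 then h.choose else 0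

/-- The standard additive character `χ_p(x) = e^{2πi {x}_p}` of `ℚ_p`. -/
def chi (x : ℚ_[p]) : ℂ := Complex.exp (2 * Real.pi * Complex.I * (padicFract p x : ℂ))

/-- The set `I_p` of `p`-adic fractional numbers, i.e. numbers of the form
`k/p^m` with `0 ≤ k < p^m`. -/
def Ip : Set ℚ_[p] := {x | ∃ m k : ℕ, k < p ^ m ∧ x = (k : ℚ_[p]) / (p : ℚ_[p]) ^ m}

/-- The Fourier transform `f̂(ξ) = ∫ χ_p(ξ x) f(x) dx` on `ℚ_p`. -/
def FT (f : ℚ_[p] → ℂ) : ℚ_[p] → ℂ := fun ξ => ∫ x, chi p (ξ * x) * f x ∂(μp p)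

/-- The inverse Fourier transform `f̌(ξ) = ∫ χ_p(-ξ x) f(x) dx` on `ℚ_p`. -/
def invFT (f : ℚ_[p] → ℂ) : ℚ_[p] → ℂ := fun ξ => ∫ x, chi p (-(ξ * x)) * f x ∂(μp p)

/-- `f`, as an element of `L²(ℚ_p)`, belongs to the subspace `V`. -/
def inL2 (f : ℚ_[p] → ℂ) (V : Submodule ℂ (Lp ℂ 2 (μp p))) : Prop :=
  ∃ hf : MemLp f 2 (μp p), hf.toLp f ∈ V

/-- The set of `L²`-classes of the translates `φ(· - a)`, `a ∈ I_p`. -/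
def translatesSet (φ : ℚ_[p] → ℂ) : Set (Lp ℂ 2 (μp p)) :=
  {h | ∃ a ∈ Ip p, ∃ hm : MemLp (fun x => φ (x - a)) 2 (μp p), h = hm.toLp _}

/-- A multiresolution analysis of `L²(ℚ_p)` with scaling function `φ`:
an increasing family of closed subspaces `V j` with dense union and trivial
intersection, compatible with dilation by `p⁻¹`, such that the `I_p`-translates
of `φ` form an orthonormal basis of `V 0`. -/
structure IsMRA (V : ℤ → Submodule ℂ (Lp ℂ 2 (μp p))) (φ : ℚ_[p] → ℂ) : Prop where
  mono : ∀ j : ℤ, V j ≤ V (j + 1)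
  closed : ∀ j : ℤ, IsClosed (V j : Set (Lp ℂ 2 (μp p)))
  dense_union : Dense (⋃ j : ℤ, (V j : Set (Lp ℂ 2 (μp p))))
  trivial_inter : (⋂ j : ℤ, (V j : Set (Lp ℂ 2 (μp p)))) = {0}
  dilate : ∀ (j : ℤ) (f : ℚ_[p] → ℂ),
    inL2 p f (V j) ↔ inL2 p (fun x => f ((p : ℚ_[p])⁻¹ * x)) (V (j + 1))
  phi_mem : inL2 p φ (V 0)
  orthonormal : ∀ a ∈ Ip p, ∀ b ∈ Ip p,
    ∫ x, φ (x - a) * conj (φ (x - b)) ∂(μp p) = if a = b then 1 else 0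
  complete : (Submodule.span ℂ (translatesSet p φ)).topologicalClosure = V 0

/-- `φ` is a scaling function of some MRA of `L²(ℚ_p)`. -/
def IsScalingFunction (φ : ℚ_[p] → ℂ) : Prop :=
  ∃ V : ℤ → Submodule ℂ (Lp ℂ 2 (μp p)), IsMRA p V φ

/-- A measurable set `S ⊆ ℚ_p` is a scaling set if `(1_S)ˇ` is a scaling function
of an MRA in `L²(ℚ_p)`. -/
def IsScalingSet (S : Set ℚ_[p]) : Prop :=
  MeasurableSet S ∧ IsScalingFunction p (invFT p (Set.indicator S 1))

/-- The dilated translate `x ↦ p^{j/2} ψ(p^{-j} x - a)`. -/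
def wdil (ψ : ℚ_[p] → ℂ) (j : ℤ) (a : ℚ_[p]) : ℚ_[p] → ℂ :=
  fun x => ((((p : ℝ) ^ ((j : ℝ) / 2) : ℝ)) : ℂ) * ψ ((p : ℚ_[p]) ^ (-j) * x - a)

/-- The `L²`-classes of the affine system `p^{j/2} ψ_n(p^{-j}· - a)`,
`j ∈ ℤ`, `a ∈ I_p`, `1 ≤ n ≤ L`. -/
def waveletSystem {L : ℕ} (ψ : Fin L → ℚ_[p] → ℂ) : Set (Lp ℂ 2 (μp p)) :=
  {h | ∃ (n : Fin L) (j : ℤ) (a : ℚ_[p]), a ∈ Ip p ∧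
        ∃ hm : MemLp (wdil p (ψ n) j a) 2 (μp p), h = hm.toLp _}

/-- `ψ_1, …, ψ_L` is a multiwavelet for `L²(ℚ_p)`: the affine system
`{p^{j/2} ψ_n(p^{-j}· - a)}` is an orthonormal basis of `L²(ℚ_p)`. -/
def IsMultiwavelet {L : ℕ} (ψ : Fin L → ℚ_[p] → ℂ) : Prop :=
  (∀ (n n' : Fin L) (j j' : ℤ) (a a' : ℚ_[p]), a ∈ Ip p → a' ∈ Ip p →
      ∫ x, wdil p (ψ n) j a x * conj (wdil p (ψ n') j' a' x) ∂(μp p) =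
        if n = n' ∧ j = j' ∧ a = a' then 1 else 0) ∧
  (Submodule.span ℂ (waveletSystem p ψ)).topologicalClosure = ⊤

/-- A measurable set `W ⊆ ℚ_p` is a multiwavelet set of order `L` if
`W = W_1 ∪ … ∪ W_L` and the functions `ψ_n` with `ψ̂_n = 1_{W_n}` form a
multiwavelet for `L²(ℚ_p)`. -/
def IsMultiwaveletSet (L : ℕ) (W : Set ℚ_[p]) : Prop :=
  MeasurableSet W ∧
  ∃ Wn : Fin L → Set ℚ_[p], (∀ n, MeasurableSet (Wn n)) ∧ W = ⋃ n, Wn n ∧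
    ∃ ψ : Fin L → ℚ_[p] → ℂ,
      (∀ n, FT p (ψ n) = Set.indicator (Wn n) 1) ∧ IsMultiwavelet p ψ

/-- A measurable set `G ⊆ ℚ_p` is a generalized scaling set of order `L` if
`μ(G) = L/(p-1)` and `p⁻¹G \ G` is a multiwavelet set of order `L`. -/
def IsGeneralizedScalingSet (L : ℕ) (G : Set ℚ_[p]) : Prop :=
  MeasurableSet G ∧ μp p G = (L : ℝ≥0∞) / ((p : ℝ≥0∞) - 1) ∧
  IsMultiwaveletSet p L (dil p (p : ℚ_[p])⁻¹ G \ G)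

/-- The class `D_N^M` of complex-valued functions on `ℚ_p` that are locally
constant with constancy parameter `p^{-M}` (i.e. `p^M`-periodic) and
supported on `B_N(0)`. -/
def DNM (M N : ℤ) : Set (ℚ_[p] → ℂ) :=
  {f | (∀ x y : ℚ_[p], ‖y‖ ≤ (p : ℝ) ^ (-M) → f (x + y) = f x) ∧
       ∀ x : ℚ_[p], f x ≠ 0 → ‖x‖ ≤ (p : ℝ) ^ N}

/-- The space `V_j`: closure of the span of `{φ(p^{-j}· - a) : a ∈ I_p}`. -/
def Vspace (φ : ℚ_[p] → ℂ) (j : ℤ) : Submodule ℂ (Lp ℂ 2 (μp p)) :=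
  (Submodule.span ℂ
    {h : Lp ℂ 2 (μp p) | ∃ a ∈ Ip p,
      ∃ hm : MemLp (fun x => φ ((p : ℚ_[p]) ^ (-j) * x - a)) 2 (μp p),
        h = hm.toLp _}).topologicalClosure

/-- `m` is a trigonometric polynomial of degree `d`: a finite linear
combination `Σ_{a ∈ F} c_a χ_p(a ·)` of characters with translations in `I_p`,
with `d` nontrivial terms. -/
def IsTrigPolyOfDeg (m : ℚ_[p] → ℂ) (d : ℕ) : Prop :=
  ∃ (F : Finset ℚ_[p]) (c : ℚ_[p] → ℂ), (↑F : Set ℚ_[p]) ⊆ Ip p ∧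
    (∀ a ∈ F, c a ≠ 0) ∧ (∀ ξ, m ξ = ∑ a ∈ F, c a * chi p (a * ξ)) ∧ F.card = d

/-- The set `J_{p,m}` of fractions `s_{-m}/p^m + … + s_{-1}/p` with digits in
`{0,…,p-1}` and `s_{-m} ≠ 0`; equivalently `{k/p^m : 0 ≤ k < p^m, p ∤ k}`. -/
def Jpm (m : ℕ) : Set ℚ_[p] :=
  {x | ∃ k : ℕ, k < p ^ m ∧ ¬ (p : ℕ) ∣ k ∧ x = (k : ℚ_[p]) / (p : ℚ_[p]) ^ m}

/-! ### Auxiliary lemmas -/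

lemma int_of_pow_denom : ∀ (M : ℕ) (N : ℤ) (r : ℚ), r = (N : ℚ) / (p : ℚ) ^ M →
    ‖((r : ℚ) : ℚ_[p])‖ ≤ 1 → ∃ z : ℤ, r = (z : ℚ) := by
  intro M
  induction M with
  | zero => exact fun N r hr _ => ⟨N, by simpa using hr⟩
  | succ M ih =>
    intro N r hr hnorm
    have hp0 : (p : ℚ) ≠ 0 := by exact_mod_cast hp.out.ne_zero
    have hp1 : (1 : ℝ) < (p : ℝ) := by exact_mod_cast hp.out.one_lt
    have hnormN : ‖((N : ℤ) : ℚ_[p])‖ < 1 := by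
      have hcast : ((N : ℤ) : ℚ_[p]) = ((r : ℚ) : ℚ_[p]) * (p : ℚ_[p]) ^ (M + 1) := by
        have hNeq : (N : ℚ) = r * (p : ℚ) ^ (M + 1) := by rw [hr]; field_simp
        have := congrArg (fun t : ℚ => (t : ℚ_[p])) hNeq
        push_cast at this ⊢
        simpa using this
      rw [hcast, norm_mul, Padic.norm_p_pow]
      have ha : ((p : ℝ)) ^ (-((M + 1 : ℕ) : ℤ)) < 1 := by
        rw [zpow_neg, zpow_natCast]
        have h1 : (1 : ℝ) < (p : ℝ) ^ (M + 1) := by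
          apply one_lt_pow₀ hp1 (Nat.succ_ne_zero M)
        exact inv_lt_one_of_one_lt₀ h1
      have ha0 : (0 : ℝ) ≤ ((p : ℝ)) ^ (-((M + 1 : ℕ) : ℤ)) := by positivity
      calc ‖((r : ℚ) : ℚ_[p])‖ * ((p : ℝ)) ^ (-((M + 1 : ℕ) : ℤ))
          ≤ 1 * ((p : ℝ)) ^ (-((M + 1 : ℕ) : ℤ)) := by
            exact mul_le_mul_of_nonneg_right hnorm ha0
        _ < 1 := by simpa using ha
    obtain ⟨N', hN'⟩ := (Padic.norm_intCast_lt_one_iff (k := N)).mp hnormN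
    refine ih N' r ?_ hnorm
    rw [hr, hN']
    push_cast
    field_simp
    ring

lemma padicFract_exists (x : ℚ_[p]) :
    ∃ q : ℚ, (0 ≤ q ∧ q < 1 ∧ ∃ m k : ℕ, q = (k : ℚ) / (p : ℚ) ^ m) ∧
      ‖x - (q : ℚ_[p])‖ ≤ 1 := by
  have hp1 : (1 : ℝ) < (p : ℝ) := by exact_mod_cast hp.out.one_lt
  have hpQ0 : (p : ℚ_[p]) ≠ 0 := by
    exact_mod_cast (Nat.cast_ne_zero (R := ℚ_[p])).mpr hp.out.ne_zero
  obtain ⟨m, hm⟩ : ∃ m : ℕ, ‖x‖ ≤ (p : ℝ) ^ m := by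
    obtain ⟨m, hm⟩ := pow_unbounded_of_one_lt ‖x‖ hp1
    exact ⟨m, hm.le⟩
  have hz : ‖x * (p : ℚ_[p]) ^ m‖ ≤ 1 := by
    rw [norm_mul, Padic.norm_p_pow]
    have : ((p : ℝ)) ^ (-(m : ℤ)) = ((p : ℝ) ^ m)⁻¹ := by
      rw [zpow_neg, zpow_natCast]
    rw [this]
    rw [mul_inv_le_iff₀ (by positivity)]
    simpa using hm
  set z : ℤ_[p] := ⟨x * (p : ℚ_[p]) ^ m, hz⟩ with hzdef
  have hε : (0 : ℝ) < ((p : ℝ) ^ m)⁻¹ := by positivity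
  obtain ⟨n, hn⟩ := PadicInt.denseRange_natCast.exists_dist_lt z hε
  have hn' : ‖x * (p : ℚ_[p]) ^ m - (n : ℚ_[p])‖ < ((p : ℝ) ^ m)⁻¹ := by
    have h1 : dist z ((n : ℕ) : ℤ_[p]) = ‖x * (p : ℚ_[p]) ^ m - (n : ℚ_[p])‖ := by
      rw [dist_eq_norm, PadicInt.norm_def]
      congr 1
    rwa [h1] at hn
  have hmain : ‖x - ((n : ℚ_[p]) / (p : ℚ_[p]) ^ m)‖ < 1 := by
    have heq : x - (n : ℚ_[p]) / (p : ℚ_[p]) ^ m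
        = (x * (p : ℚ_[p]) ^ m - (n : ℚ_[p])) / (p : ℚ_[p]) ^ m := by
      field_simp
    rw [heq, norm_div, norm_pow, Padic.norm_p,
      div_lt_one (by positivity)]
    calc ‖x * (p : ℚ_[p]) ^ m - (n : ℚ_[p])‖ < ((p : ℝ) ^ m)⁻¹ := hn'
      _ = ((p : ℝ)⁻¹) ^ m := by rw [inv_pow]
  have hppos : (0:ℚ) < (p : ℚ) ^ m := by
    exact pow_pos (by exact_mod_cast hp.out.pos) m
  refine ⟨((n % p ^ m : ℕ) : ℚ) / (p : ℚ) ^ m,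
    ⟨div_nonneg (by positivity) hppos.le, ?_, m, n % p ^ m, rfl⟩, ?_⟩
  · rw [div_lt_one hppos]
    exact_mod_cast Nat.mod_lt n (pow_pos hp.out.pos m)
  · have hsplit : x - ((((n % p ^ m : ℕ) : ℚ) / (p : ℚ) ^ m : ℚ) : ℚ_[p])
        = (x - (n : ℚ_[p]) / (p : ℚ_[p]) ^ m) + ((n / p ^ m : ℕ) : ℚ_[p]) := by
      have hnat : (n : ℚ_[p]) = ((n % p ^ m : ℕ) : ℚ_[p])
          + ((p : ℚ_[p]) ^ m) * ((n / p ^ m : ℕ) : ℚ_[p]) := by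
        exact_mod_cast congrArg (fun t : ℕ => (t : ℚ_[p])) (Nat.mod_add_div n (p ^ m)).symm
      push_cast
      rw [hnat]
      field_simp
      ring
    rw [hsplit]
    refine le_trans (Padic.nonarchimedean _ _) (max_le hmain.le ?_)
    have := Padic.norm_int_le_one (p := p) ((n / p ^ m : ℕ) : ℤ)
    exact_mod_cast this

lemma padicFract_spec (x : ℚ_[p]) :
    (0 ≤ padicFract p x ∧ padicFract p x < 1 ∧
      ∃ m k : ℕ, padicFract p x = (k : ℚ) / (p : ℚ) ^ m) ∧
    ‖x - ((padicFract p x : ℚ) : ℚ_[p])‖ ≤ 1 := by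
  have h := padicFract_exists p x
  simp only [padicFract, dif_pos h]
  exact h.choose_spec

lemma padicFract_eq (x : ℚ_[p]) (q : ℚ) (h0 : 0 ≤ q) (h1 : q < 1)
    (hf : ∃ m k : ℕ, q = (k : ℚ) / (p : ℚ) ^ m)
    (hn : ‖x - (q : ℚ_[p])‖ ≤ 1) : padicFract p x = q := by
  obtain ⟨⟨s0, s1, m, k, hs⟩, sn⟩ := padicFract_spec p x
  obtain ⟨m', k', hq⟩ := hf
  have hp0 : (p : ℚ) ≠ 0 := by exact_mod_cast hp.out.ne_zero
  have hsub : padicFract p x - q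
      = (((k : ℤ) * (p : ℤ) ^ m' - (k' : ℤ) * (p : ℤ) ^ m : ℤ) : ℚ) / (p : ℚ) ^ (m + m') := by
    rw [hs, hq]
    push_cast
    field_simp
    ring
  have hnorm : ‖(((padicFract p x - q : ℚ)) : ℚ_[p])‖ ≤ 1 := by
    have hrw : (((padicFract p x - q : ℚ)) : ℚ_[p])
        = (x - (q : ℚ_[p])) + (-(x - ((padicFract p x : ℚ) : ℚ_[p]))) := by
      push_cast
      ring
    rw [hrw]
    refine le_trans (Padic.nonarchimedean _ _) (max_le hn ?_)
    rwa [norm_neg]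
  obtain ⟨z, hz⟩ := int_of_pow_denom p (m + m') _ _ hsub hnorm
  have hb1 : padicFract p x - q < 1 := by linarith
  have hb2 : (-1 : ℚ) < padicFract p x - q := by linarith
  have hb1' : (z : ℚ) < 1 := by rw [← hz]; exact hb1
  have hb2' : (-1 : ℚ) < (z : ℚ) := by rw [← hz]; exact hb2
  have hz0 : z = 0 := by
    have h1' : z < 1 := by exact_mod_cast hb1'
    have h2' : (-1 : ℤ) < z := by exact_mod_cast hb2'
    omega
  have hzq : (z : ℚ) = 0 := by exact_mod_cast hz0
  have hzero : padicFract p x - q = 0 := by rw [hz, hzq]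
  linarith

lemma padicFract_eq' (x : ℚ_[p]) (q : ℚ) (h0 : 0 ≤ q) (h1 : q < 1)
    (hf : ∃ m k : ℕ, q = (k : ℚ) / (p : ℚ) ^ m)
    (hn : ‖x - (q : ℚ_[p])‖ ≤ 1) : padicFract p x = q :=
  padicFract_eq p x q h0 h1 hf hn

lemma padicFract_congr {x y : ℚ_[p]} (h : ‖x - y‖ ≤ 1) :
    padicFract p x = padicFract p y := by
  obtain ⟨⟨h0, h1, hf⟩, hn⟩ := padicFract_spec p y
  refine padicFract_eq p x _ h0 h1 hf ?_
  have hrw : x - ((padicFract p y : ℚ) : ℚ_[p])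
      = (x - y) + (y - ((padicFract p y : ℚ) : ℚ_[p])) := by ring
  rw [hrw]
  exact le_trans (Padic.nonarchimedean _ _) (max_le h hn)

lemma chi_norm (x : ℚ_[p]) : ‖chi p x‖ = 1 := by
  rw [chi]
  have hrw : 2 * (Real.pi : ℂ) * Complex.I * ((padicFract p x : ℚ) : ℂ)
      = ((2 * Real.pi * (padicFract p x : ℚ) : ℝ) : ℂ) * Complex.I := by
    push_cast
    ring
  rw [hrw, Complex.norm_exp_ofReal_mul_I]

lemma chi_abs (x : ℚ_[p]) : ‖chi p x‖ = 1 := by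
  exact chi_norm p x

lemma chi_mul_neg (x : ℚ_[p]) : chi p x * chi p (-x) = 1 := by
  rw [chi, chi, ← Complex.exp_add]
  obtain ⟨⟨a0, a1, m, k, ha⟩, an⟩ := padicFract_spec p x
  obtain ⟨⟨b0, b1, m', k', hb⟩, bn⟩ := padicFract_spec p (-x)
  have hp0 : (p : ℚ) ≠ 0 := by exact_mod_cast hp.out.ne_zero
  have hsum : padicFract p x + padicFract p (-x)
      = (((k : ℤ) * (p : ℤ) ^ m' + (k' : ℤ) * (p : ℤ) ^ m : ℤ) : ℚ) / (p : ℚ) ^ (m + m') := by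
    rw [ha, hb]
    push_cast
    rw [div_add_div _ _ (pow_ne_zero m hp0) (pow_ne_zero m' hp0), pow_add]
    ring_nf
  have hnorm : ‖(((padicFract p x + padicFract p (-x) : ℚ)) : ℚ_[p])‖ ≤ 1 := by
    have hrw : (((padicFract p x + padicFract p (-x) : ℚ)) : ℚ_[p])
        = (-(x - ((padicFract p x : ℚ) : ℚ_[p])))
          + (-((-x) - ((padicFract p (-x) : ℚ) : ℚ_[p]))) := by
      push_cast
      ring
    rw [hrw]
    refine le_trans (Padic.nonarchimedean _ _) (max_le ?_ ?_) <;> rw [norm_neg] <;>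
      assumption
  obtain ⟨z, hz⟩ := int_of_pow_denom p (m + m') _ _ hsum hnorm
  have hzc : ((padicFract p x : ℚ) : ℂ) + ((padicFract p (-x) : ℚ) : ℂ) = (z : ℂ) := by
    exact_mod_cast congrArg (fun t : ℚ => (t : ℂ)) hz
  have hexp : 2 * (Real.pi : ℂ) * Complex.I * ((padicFract p x : ℚ) : ℂ)
      + 2 * (Real.pi : ℂ) * Complex.I * ((padicFract p (-x) : ℚ) : ℂ)
      = (z : ℂ) * (2 * (Real.pi : ℂ) * Complex.I) := by
    rw [← hzc]; ring
  rw [hexp, Complex.exp_int_mul_two_pi_mul_I]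

lemma chi_conj (x : ℚ_[p]) : (starRingEnd ℂ) (chi p x) = chi p (-x) := by
  have h1 := chi_mul_neg p x
  have h2 : (starRingEnd ℂ) (chi p x) * chi p x = 1 := by
    have := Complex.normSq_eq_norm_sq (chi p x)
    have habs : ‖chi p x‖ = 1 := by
      exact chi_norm p x
    calc (starRingEnd ℂ) (chi p x) * chi p x = chi p x * (starRingEnd ℂ) (chi p x) := by ring
      _ = ((Complex.normSq (chi p x) : ℝ) : ℂ) := Complex.mul_conj _
      _ = 1 := by rw [this, habs]; norm_num
  calc (starRingEnd ℂ) (chi p x)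
      = (starRingEnd ℂ) (chi p x) * (chi p x * chi p (-x)) := by rw [h1, mul_one]
    _ = ((starRingEnd ℂ) (chi p x) * chi p x) * chi p (-x) := by ring
    _ = chi p (-x) := by rw [h2, one_mul]

lemma chi_continuous : Continuous (chi p) := by
  rw [continuous_iff_continuousAt]
  intro x
  have hp0 : (0 : ℝ) < (p : ℝ) := by
    exact_mod_cast hp.out.pos
  have hev : chi p =ᶠ[𝓝 x] fun _ => chi p x := by
    filter_upwards [Metric.ball_mem_nhds x hp0] with y hy
    have h1 : ‖y - x‖ ≤ 1 := by
      have hlt : ‖y - x‖ < (p : ℝ) ^ ((0 : ℤ) + 1) := by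
        rw [Metric.mem_ball, dist_eq_norm] at hy
        simpa using hy
      have := (Padic.norm_le_pow_iff_norm_lt_pow_add_one (y - x) 0).mpr hlt
      simpa using this
    rw [chi, chi, padicFract_congr p h1]
  exact hev.continuousAt

lemma zero_mem_Ip : (0 : ℚ_[p]) ∈ Ip p := ⟨0, 0, by norm_num, by simp⟩

lemma denseRange_ratCast : DenseRange ((↑) : ℚ → ℚ_[p]) := by
  rw [Metric.denseRange_iff]
  intro x r hr
  obtain ⟨q, hq⟩ := Padic.rat_dense (p := p) x hr
  exact ⟨q, by rwa [dist_eq_norm]⟩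

instance : TopologicalSpace.SeparableSpace ℚ_[p] :=
  (denseRange_ratCast p).separableSpace'

instance : SecondCountableTopology ℚ_[p] :=
  UniformSpace.secondCountable_of_separable _

instance : (μp p).IsAddHaarMeasure :=
  Measure.isAddHaarMeasure_addHaarMeasure _

/-- If `S` is a scaling set of an MRA `(V j)` and `W` is a wavelet set
whose associated wavelet `ψ` (with `ψ̂ = 1_W`) is orthogonal to `V 0`, then
`μ(S ∩ W) = 0`, i.e. `S` and `W` are disjoint up to a null set. -/
theorem stmt3 (S W : Set ℚ_[p]) (hSmeas : MeasurableSet S)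
    (V : ℤ → Submodule ℂ (Lp ℂ 2 (μp p)))
    (hMRA : IsMRA p V (invFT p (Set.indicator S 1)))
    (hW : IsMultiwaveletSet p 1 W)
    (ψ : ℚ_[p] → ℂ) (hψhat : FT p ψ = Set.indicator W 1)
    (hψwav : IsMultiwavelet p (fun _ : Fin 1 => ψ))
    (hψL2 : MemLp ψ 2 (μp p))
    (horth : ∀ g ∈ V 0, (inner ℂ (hψL2.toLp ψ) g : ℂ) = 0) :
    μp p (S ∩ W) = 0 := by
  classical
  have hWmeas : MeasurableSet W := hW.1
  -- Step 1: `μ S` is finite.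
  have hSfin : μp p S ≠ ⊤ := by
    intro htop
    have h0 : invFT p (Set.indicator S 1) = fun _ => (0 : ℂ) := by
      funext ξ
      simp only [invFT]
      apply integral_undef
      intro hint
      have hnormint : Integrable (fun x => Set.indicator S (fun _ => (1 : ℝ)) x) (μp p) := by
        refine hint.norm.congr (Eventually.of_forall fun x => ?_)
        by_cases hx : x ∈ S
        · simp [Set.indicator_of_mem hx, norm_mul, chi_norm, chi_abs]
        · simp [Set.indicator_of_notMem hx]
      rw [integrable_indicator_iff hSmeas] at hnormint
      rcases (integrableOn_const_iff (C := (1 : ℝ))).mp hnormint with h | h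
      · norm_num at h
      · rw [htop] at h; exact lt_irrefl _ h
    have horm := hMRA.orthonormal 0 (zero_mem_Ip p) 0 (zero_mem_Ip p)
    rw [if_pos rfl] at horm
    simp [h0] at horm
  -- Step 2: case analysis on integrability of `ψ`.
  by_cases hψint : Integrable ψ (μp p)
  · -- main case
    obtain ⟨hφmem, hφV⟩ := hMRA.phi_mem
    have hinner := horth _ hφV
    rw [MeasureTheory.L2.inner_def] at hinner
    have hinner' : ∫ x, (starRingEnd ℂ) (ψ x) * invFT p (Set.indicator S 1) x ∂(μp p)
        = 0 := by
      rw [← hinner]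
      apply integral_congr_ae
      filter_upwards [hψL2.coeFn_toLp, hφmem.coeFn_toLp] with x h1 h2
      rw [RCLike.inner_apply', h1, h2]
    have hφeq : ∀ x, invFT p (Set.indicator S 1) x
        = ∫ t in S, chi p (-(x * t)) ∂(μp p) := by
      intro x
      simp only [invFT]
      rw [← integral_indicator hSmeas]
      refine integral_congr_ae (Eventually.of_forall fun t => ?_)
      by_cases ht : t ∈ S
      · simp [Set.indicator_of_mem ht]
      · simp [Set.indicator_of_notMem ht]
    haveI hfinR : IsFiniteMeasure ((μp p).restrict S) := by
      constructor
      rw [Measure.restrict_apply_univ]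
      exact lt_top_iff_ne_top.mpr hSfin
    have haesm : AEStronglyMeasurable
        (fun z : ℚ_[p] × ℚ_[p] => (starRingEnd ℂ) (ψ z.1) * chi p (-(z.1 * z.2)))
        ((μp p).prod ((μp p).restrict S)) := by
      have h1 : AEStronglyMeasurable (fun z : ℚ_[p] × ℚ_[p] => ψ z.1)
          ((μp p).prod ((μp p).restrict S)) := hψL2.aestronglyMeasurable.comp_fst
      have h2 : Continuous (fun z : ℚ_[p] × ℚ_[p] => chi p (-(z.1 * z.2))) :=
        (chi_continuous p).comp (Continuous.neg (continuous_fst.mul continuous_snd))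
      exact (RCLike.continuous_conj.comp_aestronglyMeasurable h1).mul h2.aestronglyMeasurable
    have hprod : Integrable
        (fun z : ℚ_[p] × ℚ_[p] => (starRingEnd ℂ) (ψ z.1) * chi p (-(z.1 * z.2)))
        ((μp p).prod ((μp p).restrict S)) := by
      have hbound : Integrable (fun z : ℚ_[p] × ℚ_[p] => ‖ψ z.1‖ * 1)
          ((μp p).prod ((μp p).restrict S)) :=
        Integrable.mul_prod hψint.norm (integrable_const 1)
      refine hbound.mono' haesm (Eventually.of_forall fun z => ?_)
      simp [norm_mul, chi_norm, chi_abs, RCLike.norm_conj]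
    have hcalc : ∫ x, (starRingEnd ℂ) (ψ x) * invFT p (Set.indicator S 1) x ∂(μp p)
        = (((μp p) (S ∩ W)).toReal : ℂ) := by
      calc ∫ x, (starRingEnd ℂ) (ψ x) * invFT p (Set.indicator S 1) x ∂(μp p)
          = ∫ x, ∫ t in S, (starRingEnd ℂ) (ψ x) * chi p (-(x * t)) ∂(μp p) ∂(μp p) := by
            refine integral_congr_ae (Eventually.of_forall fun x => ?_)
            beta_reduce
            rw [hφeq x]
            exact (integral_const_mul _ _).symm
        _ = ∫ t in S, ∫ x, (starRingEnd ℂ) (ψ x) * chi p (-(x * t)) ∂(μp p) ∂(μp p) :=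
            integral_integral_swap hprod
        _ = ∫ t in S, (starRingEnd ℂ) (FT p ψ t) ∂(μp p) := by
            refine integral_congr_ae (Eventually.of_forall fun t => ?_)
            beta_reduce
            rw [show FT p ψ t = ∫ x, chi p (t * x) * ψ x ∂(μp p) from rfl, ← integral_conj]
            refine integral_congr_ae (Eventually.of_forall fun x => ?_)
            beta_reduce
            calc (starRingEnd ℂ) (ψ x) * chi p (-(x * t))
                = chi p (-(t * x)) * (starRingEnd ℂ) (ψ x) := by
                  rw [mul_comm x t]; ring
              _ = (starRingEnd ℂ) (chi p (t * x) * ψ x) := by rw [map_mul, chi_conj]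
        _ = ∫ t in S, Set.indicator W 1 t ∂(μp p) := by
            refine integral_congr_ae (Eventually.of_forall fun t => ?_)
            beta_reduce
            rw [hψhat]
            by_cases ht : t ∈ W
            · simp [Set.indicator_of_mem ht]
            · simp [Set.indicator_of_notMem ht]
        _ = (((μp p) (S ∩ W)).toReal : ℂ) := by
            rw [← integral_indicator hSmeas, Set.indicator_indicator]
            rw [show (Set.indicator (S ∩ W) (1 : ℚ_[p] → ℂ))
                = Set.indicator (S ∩ W) (fun _ => (1 : ℂ)) from rfl]
            rw [integral_indicator_const (1 : ℂ) (hSmeas.inter hWmeas)]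
            simp [measureReal_def]
    have h0 : (((μp p) (S ∩ W)).toReal : ℂ) = 0 := by rw [← hcalc]; exact hinner'
    have h0' : ((μp p) (S ∩ W)).toReal = 0 := by exact_mod_cast h0
    have hfin : (μp p) (S ∩ W) ≠ ⊤ := by
      intro h
      exact hSfin (top_unique (h ▸ measure_mono Set.inter_subset_left))
    rcases (ENNReal.toReal_eq_zero_iff _).mp h0' with h | h
    · exact h
    · exact absurd h hfin
  · -- `ψ` not integrable: then `FT ψ = 0`, forcing `W = ∅`.
    have hFT0 : FT p ψ = fun _ => (0 : ℂ) := by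
      funext ξ
      simp only [FT]
      apply integral_undef
      intro hint
      apply hψint
      rw [← integrable_norm_iff hψL2.aestronglyMeasurable]
      refine hint.norm.congr (Eventually.of_forall fun x => ?_)
      simp [norm_mul, chi_norm, chi_abs]
    have hWempty : W = ∅ := by
      ext w
      simp only [Set.mem_empty_iff_false, iff_false]
      intro hw
      have h1 : (0 : ℂ) = 1 := by
        calc (0 : ℂ) = FT p ψ w := (congrFun hFT0 w).symm
          _ = Set.indicator W 1 w := congrFun hψhat w
          _ = 1 := Set.indicator_of_mem hw 1
      exact zero_ne_one h1
    rw [hWempty, Set.inter_empty]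
    exact measure_empty

end PadicScaling
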